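/- For every μ ∈ (0,1) and positive integer k, define G_μ(k) = k/(1+k^2) - √(k·tanh(√μ k)/√μ) / (1 + k·tanh(√μ k)/√μ). Then there exists a constant C > 0, independent of μ and k, such that |G_μ(k)| ≤ C·√μ. -/

import Mathlib

private lemma mono_helper {F F' : ℝ → ℝ} (hF : ∀ x, HasDerivAt F (F' x) x)
    (hF' : ∀ x, 0 ≤ x → 0 ≤ F' x) : MonotoneOn F (Set.Ici 0) := by
  apply monotoneOn_of_deriv_nonneg (convex_Ici 0)
  · exact fun x _ => (hF x).continuousAt.continuousWithinAt
  · exact fun x _ => (hF x).differentiableAt.differentiableWithinAt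
  · intro x hx
    rw [interior_Ici] at hx
    rw [(hF x).deriv]
    exact hF' x hx.le

private lemma sinh_nonneg' {x : ℝ} (hx : 0 ≤ x) : 0 ≤ Real.sinh x := by
  rw [Real.sinh_eq]
  have := Real.exp_le_exp.2 (neg_le_self hx)
  linarith

private lemma sinh_le_mul_cosh {x : ℝ} (hx : 0 ≤ x) : Real.sinh x ≤ x * Real.cosh x := by
  have hF : ∀ y : ℝ, HasDerivAt (fun z => z * Real.cosh z - Real.sinh z)
      (y * Real.sinh y) y := by
    intro y
    have h := ((hasDerivAt_id y).mul (Real.hasDerivAt_cosh y)).sub (Real.hasDerivAt_sinh y)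
    refine h.congr_deriv ?_
    simp only [id_eq]
    ring
  have := mono_helper hF (fun y hy => mul_nonneg hy (sinh_nonneg' hy))
    (Set.mem_Ici.2 le_rfl) (Set.mem_Ici.2 hx) hx
  simpa using this

private lemma cubic_cosh_le_sinh {x : ℝ} (hx : 0 ≤ x) :
    (x - x ^ 3 / 3) * Real.cosh x ≤ Real.sinh x := by
  have hF : ∀ y : ℝ, HasDerivAt (fun z => Real.sinh z - (z - z ^ 3 / 3) * Real.cosh z)
      (y ^ 2 * Real.cosh y - (y - y ^ 3 / 3) * Real.sinh y) y := by
    intro y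
    have hpoly : HasDerivAt (fun z : ℝ => z - z ^ 3 / 3) (1 - (3 : ℕ) * y ^ 2 / 3) y :=
      (hasDerivAt_id y).sub ((hasDerivAt_pow 3 y).div_const 3)
    have h := (Real.hasDerivAt_sinh y).sub (hpoly.mul (Real.hasDerivAt_cosh y))
    refine h.congr_deriv ?_
    push_cast
    ring
  have hF' : ∀ y : ℝ, 0 ≤ y →
      0 ≤ y ^ 2 * Real.cosh y - (y - y ^ 3 / 3) * Real.sinh y := by
    intro y hy
    have h1 := sinh_le_mul_cosh hy
    have h2 := sinh_nonneg' hy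
    nlinarith [mul_le_mul_of_nonneg_left h1 hy, mul_nonneg (mul_nonneg hy (mul_nonneg hy hy)) h2]
  have := mono_helper hF hF' (Set.mem_Ici.2 le_rfl) (Set.mem_Ici.2 hx) hx
  simp only [Real.sinh_zero, Real.cosh_zero] at this
  nlinarith [this]

private lemma tanh_nonneg' {x : ℝ} (hx : 0 ≤ x) : 0 ≤ Real.tanh x := by
  rw [Real.tanh_eq_sinh_div_cosh]
  exact div_nonneg (sinh_nonneg' hx) (Real.cosh_pos x).le

private lemma tanh_le_self {x : ℝ} (hx : 0 ≤ x) : Real.tanh x ≤ x := by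
  rw [Real.tanh_eq_sinh_div_cosh, div_le_iff₀ (Real.cosh_pos x)]
  exact sinh_le_mul_cosh hx

private lemma tanh_cubic_lower {x : ℝ} (hx : 0 ≤ x) : x - x ^ 3 / 3 ≤ Real.tanh x := by
  rw [Real.tanh_eq_sinh_div_cosh, le_div_iff₀ (Real.cosh_pos x)]
  exact cubic_cosh_le_sinh hx

private lemma tanh_ge_two_thirds {x : ℝ} (hx : 1 ≤ x) : 2 / 3 ≤ Real.tanh x := by
  rw [Real.tanh_eq_sinh_div_cosh, le_div_iff₀ (Real.cosh_pos x), Real.sinh_eq, Real.cosh_eq]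
  have h1 : Real.exp 1 ≤ Real.exp x := Real.exp_le_exp.2 hx
  have h2 : (2.7 : ℝ) < Real.exp 1 := lt_trans (by norm_num) Real.exp_one_gt_d9
  have h3 : Real.exp x * Real.exp (-x) = 1 := by
    rw [← Real.exp_add]; simp
  have h4 := Real.exp_pos (-x)
  nlinarith [h1, h2, h3, h4]

private lemma key_ineq (K b D : ℝ) (hK : 1 ≤ K) (hb : 0 ≤ b) (hbK : b ≤ K ^ 2)
    (hD : 0 ≤ D) (h1 : K ^ 2 - b ≤ D * K * (1 + b)) :
    |K / (1 + K ^ 2) - Real.sqrt b / (1 + b)| ≤ D := by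
  set r := Real.sqrt b with hrdef
  have hr : 0 ≤ r := Real.sqrt_nonneg b
  have hr2 : r ^ 2 = b := Real.sq_sqrt hb
  have hrK : r ≤ K := by
    rw [hrdef]
    calc Real.sqrt b ≤ Real.sqrt (K ^ 2) := Real.sqrt_le_sqrt hbK
      _ = K := Real.sqrt_sq (by linarith)
  rw [← hr2] at h1 ⊢
  have hK2 : (0 : ℝ) < 1 + K ^ 2 := by positivity
  have hr2p : (0 : ℝ) < 1 + r ^ 2 := by positivity
  have hid : K / (1 + K ^ 2) - r / (1 + r ^ 2)
      = ((K - r) * (1 - K * r)) / ((1 + K ^ 2) * (1 + r ^ 2)) := by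
    field_simp
    ring
  rw [hid, abs_div, abs_of_pos (mul_pos hK2 hr2p), div_le_iff₀ (mul_pos hK2 hr2p)]
  have h3 : K - r ≤ D * (1 + r ^ 2) := by
    nlinarith [mul_nonneg hr (sub_nonneg.2 hrK), mul_nonneg (sub_nonneg.2 hK)
      (sub_nonneg.2 hrK)]
  have habs : |1 - K * r| ≤ 1 + K ^ 2 := by
    rw [abs_le]
    constructor <;> nlinarith [mul_nonneg (by linarith : (0:ℝ) ≤ K) hr]
  rw [abs_mul, abs_of_nonneg (sub_nonneg.2 hrK)]
  calc (K - r) * |1 - K * r| ≤ (D * (1 + r ^ 2)) * (1 + K ^ 2) :=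
        mul_le_mul h3 habs (abs_nonneg _) (by positivity)
    _ = D * ((1 + K ^ 2) * (1 + r ^ 2)) := by ring

private lemma main_aux (s K : ℝ) (hs0 : 0 < s) (hs1 : s < 1) (hK : 1 ≤ K) :
    |K / (1 + K ^ 2) - Real.sqrt (K * Real.tanh (s * K) / s) / (1 + K * Real.tanh (s * K) / s)|
      ≤ 2 * s := by
  have hK0 : (0 : ℝ) < K := lt_of_lt_of_le one_pos hK
  set b : ℝ := K * Real.tanh (s * K) / s with hbdef
  have ht0 : 0 ≤ s * K := by positivity
  have htanh0 : 0 ≤ Real.tanh (s * K) := tanh_nonneg' ht0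
  have hb0 : 0 ≤ b := by positivity
  have hsb : s * b = K * Real.tanh (s * K) := by
    rw [hbdef]; field_simp
  have hbK : b ≤ K ^ 2 := by
    rw [hbdef, div_le_iff₀ hs0]
    nlinarith [mul_le_mul_of_nonneg_left (tanh_le_self ht0) hK0.le]
  apply key_ineq K b (2 * s) hK hb0 hbK (by positivity)
  rcases le_total (s * K) 1 with hcase | hcase
  · -- small t case
    have hlow := tanh_cubic_lower ht0
    have hdiff : K ^ 2 - b ≤ s ^ 2 * K ^ 4 / 3 := by
      have h5 : s * (K ^ 2 - b) ≤ s * (s ^ 2 * K ^ 4 / 3) := by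
        rw [mul_sub, hsb]
        nlinarith [mul_le_mul_of_nonneg_left hlow hK0.le]
      exact le_of_mul_le_mul_left h5 hs0
    have hblow : 2 / 3 * K ^ 2 ≤ b := by
      have h7 : 2 / 3 * (s * K) ≤ Real.tanh (s * K) := by
        nlinarith [hlow, mul_nonneg ht0 (by nlinarith : (0:ℝ) ≤ 1 - (s * K) ^ 2)]
      have h6 : s * (2 / 3 * K ^ 2) ≤ s * b := by
        rw [hsb]
        nlinarith [mul_le_mul_of_nonneg_left h7 hK0.le]
      exact le_of_mul_le_mul_left h6 hs0
    nlinarith [hdiff, mul_le_mul_of_nonneg_right hcase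
        (by positivity : (0:ℝ) ≤ s * K ^ 3),
      mul_le_mul_of_nonneg_left hblow (by positivity : (0:ℝ) ≤ 2 * s * K),
      mul_pos hs0 hK0]
  · -- large t case
    have h23 : 2 / 3 ≤ Real.tanh (s * K) := tanh_ge_two_thirds hcase
    have h8 : 2 / 3 * K ≤ s * b := by
      rw [hsb]
      nlinarith [mul_le_mul_of_nonneg_left h23 hK0.le]
    nlinarith [mul_le_mul_of_nonneg_left h8 (by positivity : (0:ℝ) ≤ 2 * K),
      hb0, mul_pos hs0 hK0, sq_nonneg K]

/-- There is C > 0, independent of μ ∈ (0,1) and k ≥ 1, with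
|k/(1+k²) - √(k tanh(√μ k)/√μ)/(1 + k tanh(√μ k)/√μ)| ≤ C√μ. -/
theorem abs_G_mu_le_sqrt_mu :
    ∃ C : ℝ, 0 < C ∧ ∀ (μ : ℝ), 0 < μ → μ < 1 → ∀ (k : ℕ), 1 ≤ k →
      |(k : ℝ) / (1 + (k : ℝ) ^ 2)
        - Real.sqrt ((k : ℝ) * Real.tanh (Real.sqrt μ * k) / Real.sqrt μ)
            / (1 + (k : ℝ) * Real.tanh (Real.sqrt μ * k) / Real.sqrt μ)|
        ≤ C * Real.sqrt μ := by
  refine ⟨2, two_pos, ?_⟩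
  intro μ hμ0 hμ1 k hk
  have hs0 : 0 < Real.sqrt μ := Real.sqrt_pos.2 hμ0
  have hs1 : Real.sqrt μ < 1 := by
    nlinarith [Real.sq_sqrt hμ0.le, hs0]
  exact main_aux (Real.sqrt μ) (k : ℝ) hs0 hs1 (by exact_mod_cast hk)
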